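/- (Configuration e, the transpose of Configuration E.) Let ŵ ∈ S_N, regarded as a bijection {1,…,N} → {1,…,n₁}×{1,…,n₂}. Suppose there are k ∈ {1,…,N−2}, i ∈ {1,…,n₁}, j ∈ {1,…,n₂−2} such that ŵ(k) = (i,j), ŵ(k+1) = (i,j+1), ŵ(k+2) = (i,j+2). Then: (1) for v ∈ W determined by v⁻¹ = (1, (j j+1 j+2)) and v̂ ∈ S_N determined by v̂⁻¹ = ŵ·(k k+1 k+2)·ŵ₀, one has ŵ·Φ̂(((v̂ŵ)^∨)⁻¹) = {ε̂_{(i,j+1)} − ε̂_{(i,j)}, ε̂_{(i,j+2)} − ε̂_{(i,j)}} and Φ(v⁻¹) = {η_{j+1} − η_j, η_{j+2} − η_j}, and ρ restricts to a bijection between these two sets; and (2) for v ∈ W determined by v⁻¹ = (1, (j j+2 j+1)) and v̂ ∈ S_N determined by v̂⁻¹ = ŵ·(k k+2 k+1)·ŵ₀, one has ŵ·Φ̂(((v̂ŵ)^∨)⁻¹) = {ε̂_{(i,j+2)} − ε̂_{(i,j+1)}, ε̂_{(i,j+2)} − ε̂_{(i,j)}} and Φ(v⁻¹) = {η_{j+2}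 − η_{j+1}, η_{j+2} − η_j}, and ρ restricts to a bijection between these two sets. -/

import Mathlib

open Equiv

/-- The weight lattice `L = ℤ^{n₁} × ℤ^{n₂}` of `GL(n₁) × GL(n₂)`. -/
abbrev L (n₁ n₂ : ℕ) : Type := (Fin n₁ → ℤ) × (Fin n₂ → ℤ)

/-- The weight lattice `L̂ = ℤ^N` of `GL(N)`. -/
abbrev Lhat (N : ℕ) : Type := Fin N → ℤ

/-- The standard basis vector `ε_a` of the first factor of `L`. -/
def eps {n₁ n₂ : ℕ} (a : Fin n₁) : L n₁ n₂ := (Pi.single a 1, 0)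

/-- The standard basis vector `η_c` of the second factor of `L`. -/
def eta {n₁ n₂ : ℕ} (c : Fin n₂) : L n₁ n₂ := (0, Pi.single c 1)

/-- The standard basis vector `ε̂_p` of `L̂`. -/
def epsHat {N : ℕ} (p : Fin N) : Lhat N := Pi.single p 1

/-- The lexicographic identification of `{1,…,n₁} × {1,…,n₂}` with `{1,…,n₁n₂}`,
`(i,j) ↦ (i-1)n₂ + j` in 1-based terms. -/
def lex {n₁ n₂ : ℕ} (i : Fin n₁) (j : Fin n₂) : Fin (n₁ * n₂) :=
  finProdFinEquiv (i, j)

/-- The action of `W = S_{n₁} × S_{n₂}` on `L`, characterised by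
`u • ε_a = ε_{u₁ a}` and `u • η_c = η_{u₂ c}`. -/
def wAct {n₁ n₂ : ℕ} (u : Perm (Fin n₁) × Perm (Fin n₂)) (x : L n₁ n₂) : L n₁ n₂ :=
  (x.1 ∘ u.1.symm, x.2 ∘ u.2.symm)

/-- The action of `Ŵ = S_N` on `L̂`, characterised by `û • ε̂_p = ε̂_{û p}`. -/
def hatAct {N : ℕ} (u : Perm (Fin N)) (x : Lhat N) : Lhat N := x ∘ u.symm

/-- The positive roots `Φ⁺` of `GL(n₁) × GL(n₂)`. -/
def PhiPos (n₁ n₂ : ℕ) : Set (L n₁ n₂) :=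
  {x | ∃ a b : Fin n₁, a < b ∧ x = eps a - eps b} ∪
    {x | ∃ c d : Fin n₂, c < d ∧ x = eta c - eta d}

/-- The negative roots `Φ⁻ = -Φ⁺`. -/
def PhiNeg (n₁ n₂ : ℕ) : Set (L n₁ n₂) := Neg.neg '' PhiPos n₁ n₂

/-- The inversion set `Φ(u) = Φ⁻ ∩ u · Φ⁺`. -/
def Phi {n₁ n₂ : ℕ} (u : Perm (Fin n₁) × Perm (Fin n₂)) : Set (L n₁ n₂) :=
  PhiNeg n₁ n₂ ∩ wAct u '' PhiPos n₁ n₂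

/-- The positive roots `Φ̂⁺` of `GL(N)`. -/
def PhiHatPos (N : ℕ) : Set (Lhat N) :=
  {x | ∃ p q : Fin N, p < q ∧ x = epsHat p - epsHat q}

/-- The negative roots `Φ̂⁻ = -Φ̂⁺`. -/
def PhiHatNeg (N : ℕ) : Set (Lhat N) := Neg.neg '' PhiHatPos N

/-- The inversion set `Φ̂(û) = Φ̂⁻ ∩ û · Φ̂⁺`. -/
def PhiHat {N : ℕ} (u : Perm (Fin N)) : Set (Lhat N) :=
  PhiHatNeg N ∩ hatAct u '' PhiHatPos N

/-- The longest element `ŵ₀ : k ↦ N + 1 - k` of `S_N`. -/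
def w0 (N : ℕ) : Perm (Fin N) := Fin.revPerm

/-- The 3-cycle `(a b c)` sending `a ↦ b ↦ c ↦ a` (permutations composed right-to-left). -/
def cyc {α : Type*} [DecidableEq α] (a b c : α) : Perm α :=
  Equiv.swap a b * Equiv.swap b c


/-! ### Auxiliary lemmas -/

lemma single_sub_inj {n : ℕ} {p q p' q' : Fin n} (hpq : p ≠ q) (hpq' : p' ≠ q')
    (h : epsHat p - epsHat q = epsHat p' - epsHat q') : p = p' ∧ q = q' := by
  have h1 := congrFun h p
  have h2 := congrFun h q
  clear h
  simp only [epsHat, Pi.sub_apply, Pi.single_apply, if_pos rfl, if_neg hpq,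
    if_neg (Ne.symm hpq)] at h1 h2
  constructor
  · by_contra hne
    rw [if_neg hne] at h1
    split_ifs at h1 <;> omega
  · by_contra hne
    rw [if_neg hne] at h2
    split_ifs at h2 <;> omega

lemma hatAct_pair {N : ℕ} (u : Perm (Fin N)) (p q : Fin N) :
    hatAct u (epsHat p - epsHat q) = epsHat (u p) - epsHat (u q) := by
  funext m
  simp [hatAct, epsHat, Pi.single_apply, Equiv.symm_apply_eq, Function.comp]

lemma phiHat_eq {N : ℕ} (u : Perm (Fin N)) :
    PhiHat u = {x | ∃ a b : Fin N, a < b ∧ u b < u a ∧ x = epsHat (u a) - epsHat (u b)} := by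
  ext x
  constructor
  · rintro ⟨⟨y, ⟨p, q, hpq, rfl⟩, rfl⟩, z, ⟨a, b, hab, rfl⟩, hz⟩
    rw [hatAct_pair, neg_sub] at hz
    obtain ⟨h1, h2⟩ := single_sub_inj (u.injective.ne hab.ne) hpq.ne' hz
    exact ⟨a, b, hab, by rw [h1, h2]; exact hpq, by rw [h1, h2, neg_sub]⟩
  · rintro ⟨a, b, hab, hu, rfl⟩
    exact ⟨⟨epsHat (u b) - epsHat (u a), ⟨u b, u a, hu, rfl⟩, by rw [neg_sub]⟩,
      epsHat a - epsHat b, ⟨a, b, hab, rfl⟩, hatAct_pair u a b⟩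

lemma wAct_eta {n₁ n₂ : ℕ} (c : Perm (Fin n₂)) (a b : Fin n₂) :
    wAct ((1, c) : Perm (Fin n₁) × Perm (Fin n₂)) (eta a - eta b) = eta (c a) - eta (c b) := by
  refine Prod.ext ?_ ?_
  · simp [wAct, eta]
  · funext m
    simp [wAct, eta, Pi.single_apply, Equiv.symm_apply_eq]

lemma phi_one_eq {n₁ n₂ : ℕ} (c : Perm (Fin n₂)) :
    Phi ((1, c) : Perm (Fin n₁) × Perm (Fin n₂)) =
      {x | ∃ a b : Fin n₂, a < b ∧ c b < c a ∧ x = eta (c a) - eta (c b)} := by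
  ext x
  constructor
  · rintro ⟨⟨y, hy, rfl⟩, z, hz, hzx⟩
    rcases hy with ⟨p, q, hpq, rfl⟩ | ⟨p, q, hpq, rfl⟩ <;>
      rcases hz with ⟨a, b, hab, rfl⟩ | ⟨a, b, hab, rfl⟩
    · -- eps/eps
      exfalso
      have h1 : (epsHat a - epsHat b : Fin n₁ → ℤ) = epsHat q - epsHat p := by
        have := congrArg Prod.fst hzx
        simpa [wAct, eps, epsHat, neg_sub, Equiv.Perm.one_symm] using this
      obtain ⟨rfl, rfl⟩ := single_sub_inj hab.ne hpq.ne' h1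
      exact absurd hpq (lt_asymm hab)
    · -- eps neg, eta image
      exfalso
      have h1 := congrFun (congrArg Prod.fst hzx) q
      simp [wAct, eps, eta, Pi.single_apply, hpq.ne'] at h1
    · -- eta neg, eps image
      exfalso
      have h1 := congrFun (congrArg Prod.snd hzx) q
      simp [wAct, eps, eta, Pi.single_apply, hpq.ne'] at h1
    · -- eta/eta
      rw [wAct_eta, neg_sub] at hzx
      have h1 : (epsHat (c a) - epsHat (c b) : Fin n₂ → ℤ) = epsHat q - epsHat p := by
        have := congrArg Prod.snd hzx
        simpa [eta, epsHat] using this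
      obtain ⟨h2, h3⟩ := single_sub_inj (c.injective.ne hab.ne) hpq.ne' h1
      exact ⟨a, b, hab, by rw [h2, h3]; exact hpq, by rw [neg_sub, hzx]⟩
  · rintro ⟨a, b, hab, hc, rfl⟩
    exact ⟨⟨eta (c b) - eta (c a), Or.inr ⟨c b, c a, hc, rfl⟩, by rw [neg_sub]⟩,
      eta a - eta b, Or.inr ⟨a, b, hab, rfl⟩, wAct_eta c a b⟩

lemma cyc_val₁ {n : ℕ} (k k₁ k₂ : Fin n) (h1 : (k₁ : ℕ) = (k : ℕ) + 1)
    (h2 : (k₂ : ℕ) = (k : ℕ) + 2) (x : Fin n) :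
    ((cyc k k₁ k₂ x : Fin n) : ℕ) =
      if (x : ℕ) = (k : ℕ) then (k : ℕ) + 1 else if (x : ℕ) = (k : ℕ) + 1 then (k : ℕ) + 2
      else if (x : ℕ) = (k : ℕ) + 2 then (k : ℕ) else (x : ℕ) := by
  simp only [cyc, Perm.mul_apply, Equiv.swap_apply_def]
  split_ifs <;> simp_all [Fin.ext_iff] <;> omega

lemma cyc_val₂ {n : ℕ} (k k₁ k₂ : Fin n) (h1 : (k₁ : ℕ) = (k : ℕ) + 1)
    (h2 : (k₂ : ℕ) = (k : ℕ) + 2) (x : Fin n) :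
    ((cyc k k₂ k₁ x : Fin n) : ℕ) =
      if (x : ℕ) = (k : ℕ) then (k : ℕ) + 2 else if (x : ℕ) = (k : ℕ) + 2 then (k : ℕ) + 1
      else if (x : ℕ) = (k : ℕ) + 1 then (k : ℕ) else (x : ℕ) := by
  simp only [cyc, Perm.mul_apply, Equiv.swap_apply_def]
  split_ifs <;> simp_all [Fin.ext_iff] <;> omega

lemma cyc_iff₁ {n : ℕ} (k k₁ k₂ : Fin n) (h1 : (k₁ : ℕ) = (k : ℕ) + 1)
    (h2 : (k₂ : ℕ) = (k : ℕ) + 2) (a b : Fin n) :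
    (a < b ∧ cyc k k₁ k₂ b < cyc k k₁ k₂ a) ↔
      ((a = k ∧ b = k₂) ∨ (a = k₁ ∧ b = k₂)) := by
  have ha := cyc_val₁ k k₁ k₂ h1 h2 a
  have hb := cyc_val₁ k k₁ k₂ h1 h2 b
  simp only [Fin.lt_def, Fin.ext_iff]
  split_ifs at ha hb <;> omega

lemma cyc_iff₂ {n : ℕ} (k k₁ k₂ : Fin n) (h1 : (k₁ : ℕ) = (k : ℕ) + 1)
    (h2 : (k₂ : ℕ) = (k : ℕ) + 2) (a b : Fin n) :
    (a < b ∧ cyc k k₂ k₁ b < cyc k k₂ k₁ a) ↔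
      ((a = k ∧ b = k₂) ∨ (a = k ∧ b = k₁)) := by
  have ha := cyc_val₂ k k₁ k₂ h1 h2 a
  have hb := cyc_val₂ k k₁ k₂ h1 h2 b
  simp only [Fin.lt_def, Fin.ext_iff]
  split_ifs at ha hb <;> omega

lemma cyc_apply_fst {α : Type*} [DecidableEq α] {a b c : α} (hab : a ≠ b) (hac : a ≠ c) :
    cyc a b c a = b := by
  simp [cyc, Equiv.swap_apply_of_ne_of_ne hab hac]

lemma cyc_apply_snd {α : Type*} [DecidableEq α] {a b c : α} (hca : c ≠ a) (hcb : c ≠ b) :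
    cyc a b c b = c := by
  simp [cyc, Equiv.swap_apply_of_ne_of_ne hca hcb]

lemma cyc_apply_thd {α : Type*} [DecidableEq α] (a b c : α) : cyc a b c c = a := by
  simp [cyc]

lemma invSet_eq_pair {n : ℕ} {M : Type*} [Sub M] (f : Fin n → M) (c : Perm (Fin n))
    (a₁ b₁ a₂ b₂ : Fin n)
    (hiff : ∀ a b : Fin n, (a < b ∧ c b < c a) ↔ ((a = a₁ ∧ b = b₁) ∨ (a = a₂ ∧ b = b₂))) :
    {x : M | ∃ a b : Fin n, a < b ∧ c b < c a ∧ x = f (c a) - f (c b)} =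
      {f (c a₁) - f (c b₁), f (c a₂) - f (c b₂)} := by
  ext x
  simp only [Set.mem_setOf_eq, Set.mem_insert_iff, Set.mem_singleton_iff]
  constructor
  · rintro ⟨a, b, hlt, hc, rfl⟩
    rcases (hiff a b).mp ⟨hlt, hc⟩ with ⟨rfl, rfl⟩ | ⟨rfl, rfl⟩
    · exact Or.inl rfl
    · exact Or.inr rfl
  · rintro (rfl | rfl)
    · obtain ⟨hlt, hc⟩ := (hiff a₁ b₁).mpr (Or.inl ⟨rfl, rfl⟩)
      exact ⟨a₁, b₁, hlt, hc, rfl⟩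
    · obtain ⟨hlt, hc⟩ := (hiff a₂ b₂).mpr (Or.inr ⟨rfl, rfl⟩)
      exact ⟨a₂, b₂, hlt, hc, rfl⟩

lemma bijOn_pair {α β : Type*} (f : α → β) {A B : α} {A' B' : β}
    (hA : f A = A') (hB : f B = B') (hne : A' ≠ B') : Set.BijOn f {A, B} {A', B'} := by
  refine ⟨?_, ?_, ?_⟩
  · rintro x (rfl | rfl)
    · exact Or.inl hA
    · exact Or.inr hB
  · rintro x (rfl | rfl) y (rfl | rfl) h
    · rfl
    · exact absurd (hA ▸ hB ▸ h) hne
    · exact absurd (hA ▸ hB ▸ h.symm) hne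
    · rfl
  · rintro z (rfl | rfl)
    · exact ⟨A, Or.inl rfl, hA⟩
    · exact ⟨B, Or.inr rfl, hB⟩

/-- Configuration e, the transpose of Configuration E: `ŵ(k) = (i,j)`,
`ŵ(k+1) = (i,j+1)`, `ŵ(k+2) = (i,j+2)`. Part (1) concerns `v⁻¹ = (1, (j j+1 j+2))`,
`v̂⁻¹ = ŵ (k k+1 k+2) ŵ₀`; part (2) concerns `v⁻¹ = (1, (j j+2 j+1))`,
`v̂⁻¹ = ŵ (k k+2 k+1) ŵ₀`. In each case the two sets are as indicated and `ρ` restricts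
to a bijection between them. -/
theorem config_e_transposed (n₁ n₂ : ℕ) (hn₁ : 0 < n₁) (hn₂ : 0 < n₂)
    (ρ : Lhat (n₁ * n₂) →ₗ[ℤ] L n₁ n₂)
    (hρ : ∀ (i : Fin n₁) (j : Fin n₂), ρ (epsHat (lex i j)) = eps i + eta j)
    (wh : Perm (Fin (n₁ * n₂)))
    (k k₁ k₂ : Fin (n₁ * n₂)) (hk₁ : (k₁ : ℕ) = (k : ℕ) + 1) (hk₂ : (k₂ : ℕ) = (k : ℕ) + 2)
    (i : Fin n₁)
    (j j' j'' : Fin n₂) (hj' : (j' : ℕ) = (j : ℕ) + 1) (hj'' : (j'' : ℕ) = (j : ℕ) + 2)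
    (hwk : wh k = lex i j) (hwk₁ : wh k₁ = lex i j') (hwk₂ : wh k₂ = lex i j'') :
    (∀ (v : Perm (Fin n₁) × Perm (Fin n₂)) (vh : Perm (Fin (n₁ * n₂))),
      v⁻¹ = (1, cyc j j' j'') → vh⁻¹ = wh * cyc k k₁ k₂ * w0 (n₁ * n₂) →
        hatAct wh '' PhiHat ((w0 (n₁ * n₂) * (vh * wh))⁻¹) =
          {epsHat (lex i j') - epsHat (lex i j), epsHat (lex i j'') - epsHat (lex i j)} ∧
        Phi v⁻¹ = {(eta j' - eta j : L n₁ n₂), eta j'' - eta j} ∧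
        Set.BijOn (⇑ρ) (hatAct wh '' PhiHat ((w0 (n₁ * n₂) * (vh * wh))⁻¹)) (Phi v⁻¹)) ∧
    (∀ (v : Perm (Fin n₁) × Perm (Fin n₂)) (vh : Perm (Fin (n₁ * n₂))),
      v⁻¹ = (1, cyc j j'' j') → vh⁻¹ = wh * cyc k k₂ k₁ * w0 (n₁ * n₂) →
        hatAct wh '' PhiHat ((w0 (n₁ * n₂) * (vh * wh))⁻¹) =
          {epsHat (lex i j'') - epsHat (lex i j'), epsHat (lex i j'') - epsHat (lex i j)} ∧
        Phi v⁻¹ = {(eta j'' - eta j' : L n₁ n₂), eta j'' - eta j} ∧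
        Set.BijOn (⇑ρ) (hatAct wh '' PhiHat ((w0 (n₁ * n₂) * (vh * wh))⁻¹)) (Phi v⁻¹)) := by
  have hne : ∀ {m : ℕ} (a b : Fin m), (a : ℕ) ≠ (b : ℕ) → a ≠ b :=
    fun a b h hab => h (by rw [hab])
  have hkk₁ : k ≠ k₁ := hne _ _ (by omega)
  have hkk₂ : k ≠ k₂ := hne _ _ (by omega)
  have hk₁k₂ : k₁ ≠ k₂ := hne _ _ (by omega)
  have hjj' : j ≠ j' := hne _ _ (by omega)
  have hjj'' : j ≠ j'' := hne _ _ (by omega)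
  have hj'j'' : j' ≠ j'' := hne _ _ (by omega)
  constructor
  · intro v vh hv hvh
    have hc : (w0 (n₁ * n₂) * (vh * wh))⁻¹ = cyc k k₁ k₂ := by
      rw [mul_inv_rev, mul_inv_rev, hvh]
      group
    have hset1 : hatAct wh '' PhiHat ((w0 (n₁ * n₂) * (vh * wh))⁻¹) =
        {epsHat (lex i j') - epsHat (lex i j), epsHat (lex i j'') - epsHat (lex i j)} := by
      rw [hc, phiHat_eq, invSet_eq_pair epsHat _ k k₂ k₁ k₂ (cyc_iff₁ k k₁ k₂ hk₁ hk₂),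
        cyc_apply_fst hkk₁ hkk₂, cyc_apply_thd, cyc_apply_snd (Ne.symm hkk₂) (Ne.symm hk₁k₂),
        Set.image_pair, hatAct_pair, hatAct_pair, hwk, hwk₁, hwk₂]
    have hset2 : Phi v⁻¹ = {(eta j' - eta j : L n₁ n₂), eta j'' - eta j} := by
      rw [hv, phi_one_eq, invSet_eq_pair eta _ j j'' j' j'' (cyc_iff₁ j j' j'' hj' hj''),
        cyc_apply_fst hjj' hjj'', cyc_apply_thd, cyc_apply_snd (Ne.symm hjj'') (Ne.symm hj'j'')]
    refine ⟨hset1, hset2, ?_⟩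
    rw [hset1, hset2]
    refine bijOn_pair _ ?_ ?_ ?_
    · rw [map_sub, hρ, hρ]; abel
    · rw [map_sub, hρ, hρ]; abel
    · intro h
      have h1 : (epsHat j' - epsHat j : Fin n₂ → ℤ) = epsHat j'' - epsHat j := by
        have := congrArg Prod.snd h
        simpa [eta, epsHat] using this
      exact hj'j'' (single_sub_inj (Ne.symm hjj') (Ne.symm hjj'') h1).1
  · intro v vh hv hvh
    have hc : (w0 (n₁ * n₂) * (vh * wh))⁻¹ = cyc k k₂ k₁ := by
      rw [mul_inv_rev, mul_inv_rev, hvh]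
      group
    have hset1 : hatAct wh '' PhiHat ((w0 (n₁ * n₂) * (vh * wh))⁻¹) =
        {epsHat (lex i j'') - epsHat (lex i j'), epsHat (lex i j'') - epsHat (lex i j)} := by
      rw [hc, phiHat_eq, invSet_eq_pair epsHat _ k k₂ k k₁ (cyc_iff₂ k k₁ k₂ hk₁ hk₂),
        cyc_apply_fst hkk₂ hkk₁, cyc_apply_thd, cyc_apply_snd (Ne.symm hkk₁) hk₁k₂,
        Set.image_pair, hatAct_pair, hatAct_pair, hwk, hwk₁, hwk₂]
    have hset2 : Phi v⁻¹ = {(eta j'' - eta j' : L n₁ n₂), eta j'' - eta j} := by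
      rw [hv, phi_one_eq, invSet_eq_pair eta _ j j'' j j' (cyc_iff₂ j j' j'' hj' hj''),
        cyc_apply_fst hjj'' hjj', cyc_apply_thd, cyc_apply_snd (Ne.symm hjj') hj'j'']
    refine ⟨hset1, hset2, ?_⟩
    rw [hset1, hset2]
    refine bijOn_pair _ ?_ ?_ ?_
    · rw [map_sub, hρ, hρ]; abel
    · rw [map_sub, hρ, hρ]; abel
    · intro h
      have h1 : (epsHat j'' - epsHat j' : Fin n₂ → ℤ) = epsHat j'' - epsHat j := by
        have := congrArg Prod.snd h
        simpa [eta, epsHat] using this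
      exact hjj' (single_sub_inj (Ne.symm hj'j'') (Ne.symm hjj'') h1).2.symm
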